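/- Gronwall-type blow-up control: suppose ζ : [0,T) → [0,∞) is nondecreasing, E₀ ≥ 0, and for all 0 < ε < T, ζ(T⁻) := sup_{t<T} ζ(t) satisfies ζ(T⁻) ≤ exp(C δ(ε) log(e + ζ(T⁻))) (√(Cε) + ζ(T−ε)), where δ(ε) → δ < M as ε → 0 and CM < 1. Then ζ(T⁻) < ∞, i.e., log(e + ζ(T⁻)) ≤ C' log(e + ζ(T−ε)) for some constant C' and small ε. -/
import Mathlib


/-- Abstract logarithmic Gronwall-type blow-up control. -/
theorem stmt17 (T C M δ : ℝ) (hT : 0 < T) (hC : 0 < C) (hδM : δ < M) (hCM : C * M < 1)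
    (ζ : ℝ → ℝ) (hζ : ∀ t, 0 ≤ ζ t) (hmono : MonotoneOn ζ (Set.Ico 0 T))
    (δf : ℝ → ℝ) (hδf : ∀ ε, 0 ≤ δf ε)
    (hlim : Filter.Tendsto δf (nhdsWithin 0 (Set.Ioi 0)) (nhds δ))
    (hineq : ∀ ε ∈ Set.Ioo (0 : ℝ) T, ∀ t ∈ Set.Ico (0 : ℝ) T,
      ζ t ≤ Real.exp (C * δf ε * Real.log (Real.exp 1 + ζ t)) *
        (Real.sqrt (C * ε) + ζ (T - ε))) :
    BddAbove (ζ '' Set.Ico 0 T) ∧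
      ∃ C' : ℝ, 0 < C' ∧ ∃ ε ∈ Set.Ioo (0 : ℝ) T, ∀ t ∈ Set.Ico (0 : ℝ) T,
        Real.log (Real.exp 1 + ζ t) ≤ C' * Real.log (Real.exp 1 + ζ (T - ε)) := by
  have hδ0 : 0 ≤ δ := ge_of_tendsto hlim (Filter.Eventually.of_forall hδf)
  have hCδ : C * δ < 1 := lt_trans (by nlinarith) hCM
  set θ : ℝ := (C * δ + 1) / 2 with hθdef
  have hθlt : θ < 1 := by simp only [hθdef]; linarith
  have hθgt : C * δ < θ := by simp only [hθdef]; linarith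
  have hθ0 : 0 ≤ θ := by simp only [hθdef]; positivity
  -- find suitable ε
  have hev1 : ∀ᶠ ε in nhdsWithin 0 (Set.Ioi 0), C * δf ε < θ :=
    ((hlim.const_mul C).eventually_lt_const hθgt)
  have hev2 : ∀ᶠ ε in nhdsWithin 0 (Set.Ioi 0), ε < T :=
    ((Filter.tendsto_id.mono_right nhdsWithin_le_nhds).eventually_lt_const hT)
  obtain ⟨ε, hεθ, hεT, hε0⟩ :=
    (hev1.and (hev2.and self_mem_nhdsWithin)).exists
  have hεmem : ε ∈ Set.Ioo (0 : ℝ) T := ⟨hε0, hεT⟩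
  set z : ℝ := ζ (T - ε) with hz
  set s : ℝ := Real.sqrt (C * ε) with hs
  have hs0 : 0 ≤ s := Real.sqrt_nonneg _
  have hz0 : 0 ≤ z := hζ _
  have he1 : (1 : ℝ) ≤ Real.exp 1 := by
    have := Real.add_one_le_exp (1 : ℝ); linarith
  set L : ℝ := Real.log (Real.exp 1 + z) with hL
  have hL1 : 1 ≤ L := by
    rw [hL, Real.le_log_iff_exp_le (by positivity)]
    simp; linarith
  have h1θ : 0 < 1 - θ := by linarith
  -- key estimate
  have key : ∀ t ∈ Set.Ico (0 : ℝ) T,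
      Real.log (Real.exp 1 + ζ t) ≤ Real.log (Real.exp 1 + (s + z)) / (1 - θ) := by
    intro t ht
    set x : ℝ := Real.exp 1 + ζ t with hx
    have hxpos : 0 < x := by have := hζ t; positivity
    have hlogx : 1 ≤ Real.log x := by
      rw [Real.le_log_iff_exp_le hxpos]
      simp [hx]; linarith [hζ t]
    have h1 : ζ t ≤ Real.exp (θ * Real.log x) * (s + z) := by
      have := hineq ε hεmem t ht
      refine this.trans (mul_le_mul_of_nonneg_right
        (Real.exp_le_exp.2 (by nlinarith [hδf ε, hεθ])) (by positivity))
    have hexp1 : (1 : ℝ) ≤ Real.exp (θ * Real.log x) :=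
      Real.one_le_exp (by positivity)
    have h2 : x ≤ Real.exp (θ * Real.log x) * (Real.exp 1 + (s + z)) := by
      rw [hx]; nlinarith [Real.exp_pos 1]
    have h3 : Real.log x ≤ θ * Real.log x + Real.log (Real.exp 1 + (s + z)) := by
      have := Real.log_le_log hxpos h2
      rwa [Real.log_mul (by positivity) (by positivity), Real.log_exp] at this
    rw [le_div_iff₀ h1θ]; nlinarith
  refine ⟨?_, ?_⟩
  · refine ⟨Real.exp (Real.log (Real.exp 1 + (s + z)) / (1 - θ)), ?_⟩
    rintro y ⟨t, ht, rfl⟩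
    have hk := key t ht
    have hxpos : 0 < Real.exp 1 + ζ t := by have := hζ t; positivity
    have := (Real.log_le_iff_le_exp hxpos).1 hk
    linarith [Real.exp_pos 1]
  · refine ⟨(1 + Real.log (1 + s)) / (1 - θ), ?_, ε, hεmem, ?_⟩
    · have : 0 ≤ Real.log (1 + s) := Real.log_nonneg (by linarith)
      positivity
    · intro t ht
      have hk := key t ht
      refine hk.trans ?_
      rw [div_mul_eq_mul_div, div_le_div_iff_of_pos_right h1θ]
      have hls : 0 ≤ Real.log (1 + s) := Real.log_nonneg (by linarith)
      have h4 : Real.exp 1 + (s + z) ≤ (Real.exp 1 + z) * (1 + s) := by nlinarith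
      have h5 : Real.log (Real.exp 1 + (s + z)) ≤ L + Real.log (1 + s) := by
        have := Real.log_le_log (by positivity) h4
        rwa [Real.log_mul (by positivity) (by positivity)] at this
      nlinarith
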